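/- Let C : ℝ → ℝ be twice differentiable with C'' ≤ b. Fix f_j < f_{j+1} and g ∈ [f_j, f_{j+1}], and write g = λ f_j + (1−λ) f_{j+1} with λ ∈ [0,1]. Then for every ω, λ C(ω − f_j) + (1−λ) C(ω − f_{j+1}) − C(ω − g) ≤ (b/8)(f_{j+1} − f_j)². -/

import Mathlib

/-- Randomizing between the two neighboring grid estimates costs at most
`(b/8)(f_{j+1} - f_j)²` relative to the intermediate estimate `g`. -/
theorem randomized_grid_estimate_bound
    (C C' C'' : ℝ → ℝ) (b : ℝ) (hb : 0 < b)
    (hC' : ∀ x, HasDerivAt C (C' x) x)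
    (hC'' : ∀ x, HasDerivAt C' (C'' x) x)
    (hCb : ∀ x, C'' x ≤ b)
    (fj fj1 : ℝ) (hf : fj < fj1)
    (g : ℝ) (hg : g ∈ Set.Icc fj fj1)
    (lam : ℝ) (hlam : lam ∈ Set.Icc (0 : ℝ) 1)
    (hgl : g = lam * fj + (1 - lam) * fj1) :
    ∀ ω : ℝ,
      lam * C (ω - fj) + (1 - lam) * C (ω - fj1) - C (ω - g) ≤ b / 8 * (fj1 - fj) ^ 2 := by
  intro ω
  obtain ⟨hl0, hl1⟩ := hlam
  set h : ℝ → ℝ := fun t => b / 2 * t ^ 2 - C t with hh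
  have hd : ∀ t, HasDerivAt h (b * t - C' t) t := by
    intro t
    have h1 : HasDerivAt (fun t : ℝ => b / 2 * t ^ 2) (b / 2 * (2 * t)) t := by
      simpa using ((hasDerivAt_pow 2 t).const_mul (b / 2))
    have := h1.sub (hC' t)
    convert this using 1
    all_goals first | rfl | ring
  have hderiv : deriv h = fun t => b * t - C' t := funext fun t => (hd t).deriv
  have hconv : ConvexOn ℝ Set.univ h := by
    apply convexOn_of_deriv2_nonneg convex_univ
    · exact fun t _ => ((hd t).differentiableAt).continuousAt.continuousWithinAt
    · exact fun t _ => ((hd t).differentiableAt).differentiableWithinAt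
    · intro t _
      rw [hderiv]
      exact (((hasDerivAt_id t).const_mul b).sub (hC'' t)).differentiableAt.differentiableWithinAt
    · intro t _
      have : deriv (deriv h) t = b - C'' t := by
        rw [hderiv]
        have := (((hasDerivAt_id t).const_mul b).sub (hC'' t)).deriv
        rw [show (fun t => b * t - C' t) = (fun y => b * id y) - C' from rfl, this]; ring
      simp only [Function.iterate_succ, Function.iterate_zero, Function.comp_apply, id_eq]
      rw [this]
      linarith [hCb t]
  have key := hconv.2 (Set.mem_univ (ω - fj)) (Set.mem_univ (ω - fj1)) hl0
    (by linarith : (0:ℝ) ≤ 1 - lam) (by ring)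
  have hcomb : lam • (ω - fj) + (1 - lam) • (ω - fj1) = ω - g := by
    rw [hgl]; simp [smul_eq_mul]; ring
  rw [hcomb] at key
  simp only [hh, smul_eq_mul] at key
  rw [hgl] at key ⊢
  nlinarith [mul_nonneg hb.le (sq_nonneg ((2 * lam - 1) * (fj1 - fj))), hb.le,
    mul_nonneg (mul_nonneg hb.le (sq_nonneg (fj1 - fj))) (sq_nonneg (2 * lam - 1))]
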